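/- Let B > 0, δ > 0, M ≥ 0, a starting level s₀ ∈ [0,B], a demand sequence D : ℕ → ℝ, and a cost function C : ℝ → ℝ that is Lipschitz with constant M. Then the δ-step discretization of the storage-control dynamic program incurs an optimization error of at most M·τ·δ: for every horizon τ ≥ 1 and every state s ∈ [0,B], |μ τ s − μ̃ τ s| ≤ M·τ·δ, where μ is the exact value function and μ̃ is the value function computed over the δ-grid. -/

import Mathlib

/-- Lemma 1 of the paper.
For a storage-control dynamic program with exact value function `μ` (infimum of the
Bellman recursion over the continuous state space `[0,B]`) and discretized value
function `μt` (same recursion, but with the minimization restricted to the δ-grid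
`G = {kδ : k ∈ ℕ} ∩ [0,B]`), the `δ`-step discretization incurs an optimization error
of at most `M·τ·δ`, where `M` is a Lipschitz constant of the cost `C`. -/
theorem delta_discretization_error
    (B δ M s₀ : ℝ) (hB : 0 < B) (hδ : 0 < δ) (hM : 0 ≤ M)
    (hs₀ : s₀ ∈ Set.Icc (0 : ℝ) B)
    (D : ℕ → ℝ) (C : ℝ → ℝ)
    (hC : ∀ x y : ℝ, |C x - C y| ≤ M * |x - y|)
    (G : Set ℝ) (hG : G = {x : ℝ | ∃ k : ℕ, x = (k : ℝ) * δ} ∩ Set.Icc (0 : ℝ) B)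
    (μ μt : ℕ → ℝ → ℝ)
    (hμ1 : ∀ s : ℝ, μ 1 s = C (s - s₀ + D 1))
    (hμrec : ∀ τ : ℕ, 1 ≤ τ → ∀ s : ℝ,
      μ (τ + 1) s = ⨅ s' : Set.Icc (0 : ℝ) B, (C (s - (s' : ℝ) + D (τ + 1)) + μ τ (s' : ℝ)))
    (hμt1 : ∀ s : ℝ, μt 1 s = C (s - s₀ + D 1))
    (hμtrec : ∀ τ : ℕ, 1 ≤ τ → ∀ s : ℝ,
      μt (τ + 1) s = ⨅ s' : G, (C (s - (s' : ℝ) + D (τ + 1)) + μt τ (s' : ℝ))) :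
    ∀ τ : ℕ, 1 ≤ τ → ∀ s ∈ Set.Icc (0 : ℝ) B,
      |μ τ s - μt τ s| ≤ M * (τ : ℝ) * δ := by
  -- basic facts about the grid
  have hG0 : (0 : ℝ) ∈ G := by
    rw [hG]
    exact ⟨⟨0, by simp⟩, ⟨le_refl 0, hB.le⟩⟩
  have hGsub : G ⊆ Set.Icc (0 : ℝ) B := by
    rw [hG]; exact Set.inter_subset_right
  have hGne : Nonempty G := ⟨⟨0, hG0⟩⟩
  have hIne : Nonempty (Set.Icc (0 : ℝ) B) := ⟨⟨0, ⟨le_refl 0, hB.le⟩⟩⟩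
  -- one-sided grid approximation
  have hgrid : ∀ u ∈ Set.Icc (0 : ℝ) B, ∃ q ∈ G, 0 ≤ u - q ∧ u - q ≤ δ := by
    intro u hu
    have hq1 : ((⌊u / δ⌋₊ : ℝ)) * δ ≤ u := by
      have h := Nat.floor_le (div_nonneg hu.1 hδ.le)
      calc ((⌊u / δ⌋₊ : ℝ)) * δ ≤ (u / δ) * δ := by
            exact mul_le_mul_of_nonneg_right h hδ.le
        _ = u := div_mul_cancel₀ _ hδ.ne'
    have hq2 : u - ((⌊u / δ⌋₊ : ℝ)) * δ ≤ δ := by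
      have h : u / δ < (⌊u / δ⌋₊ : ℝ) + 1 := Nat.lt_floor_add_one (u / δ)
      have h2 : u < ((⌊u / δ⌋₊ : ℝ) + 1) * δ := by
        have := mul_lt_mul_of_pos_right h hδ
        rwa [div_mul_cancel₀ _ hδ.ne'] at this
      have h3 : ((⌊u / δ⌋₊ : ℝ) + 1) * δ = ((⌊u / δ⌋₊ : ℝ)) * δ + δ := by ring
      linarith
    refine ⟨((⌊u / δ⌋₊ : ℝ)) * δ, ?_, by linarith, hq2⟩
    rw [hG]
    refine ⟨⟨⌊u / δ⌋₊, rfl⟩, ⟨by positivity, le_trans hq1 hu.2⟩⟩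
  -- boundedness-below helper
  have hbdd : ∀ (h : ℝ → ℝ) (L : ℝ), (∀ u ∈ Set.Icc (0 : ℝ) B, L ≤ h u) →
      ∀ (S : Set ℝ), S ⊆ Set.Icc (0 : ℝ) B → ∀ a d : ℝ,
      BddBelow (Set.range fun u : S => C (a - (u : ℝ) + d) + h (u : ℝ)) := by
    intro h L hL S hS a d
    refine ⟨C 0 - M * (|a| + B + |d|) + L, ?_⟩
    rintro x ⟨u, rfl⟩
    have hu := hS u.2
    have habs : |a - (u : ℝ) + d| ≤ |a| + B + |d| := by
      have h1 : |(u : ℝ)| ≤ B := abs_le.mpr ⟨by linarith [hu.1], hu.2⟩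
      calc |a - (u : ℝ) + d| ≤ |a - (u : ℝ)| + |d| := abs_add_le _ _
        _ ≤ |a| + |(u : ℝ)| + |d| := by
            have := abs_sub a (u : ℝ)
            linarith [abs_sub_abs_le_abs_sub a (u : ℝ), abs_sub a (u:ℝ)]
        _ ≤ |a| + B + |d| := by linarith
    have hc := hC 0 (a - (u : ℝ) + d)
    have habs2 : |(0 : ℝ) - (a - (u : ℝ) + d)| = |a - (u : ℝ) + d| := by
      rw [zero_sub, abs_neg]
    have hCl : C 0 - M * (|a| + B + |d|) ≤ C (a - (u : ℝ) + d) := by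
      have h1 : C 0 - C (a - (u : ℝ) + d) ≤ M * |a - (u : ℝ) + d| := by
        calc C 0 - C (a - (u : ℝ) + d) ≤ |C 0 - C (a - (u : ℝ) + d)| := le_abs_self _
          _ ≤ M * |(0 : ℝ) - (a - (u : ℝ) + d)| := hc
          _ = M * |a - (u : ℝ) + d| := by rw [habs2]
      nlinarith
    exact add_le_add hCl (hL _ (hS u.2))
  -- Lipschitz comparison: C x ≤ C y + M * |x - y|
  have hClip : ∀ x y : ℝ, C x ≤ C y + M * |x - y| := by
    intro x y
    have := hC x y
    have h1 : C x - C y ≤ |C x - C y| := le_abs_self _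
    linarith
  -- main induction
  have main : ∀ τ : ℕ, 1 ≤ τ →
      (∃ L : ℝ, ∀ u ∈ Set.Icc (0 : ℝ) B, L ≤ μ τ u) ∧
      (∃ L : ℝ, ∀ u ∈ Set.Icc (0 : ℝ) B, L ≤ μt τ u) ∧
      (∀ s : ℝ, μ τ s ≤ μt τ s) ∧
      (∀ u q : ℝ, 0 ≤ u - q → u - q ≤ δ → μt τ q ≤ μ τ u + M * τ * δ) := by
    intro τ hτ
    induction τ, hτ using Nat.le_induction with
    | base =>
      refine ⟨⟨C (D 1) - M * B, ?_⟩, ⟨C (D 1) - M * B, ?_⟩, ?_, ?_⟩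
      · intro u hu
        rw [hμ1]
        have h := hClip (D 1) (u - s₀ + D 1)
        have habs : |D 1 - (u - s₀ + D 1)| ≤ B := by
          rw [show D 1 - (u - s₀ + D 1) = s₀ - u by ring]
          exact abs_le.mpr ⟨by linarith [hu.2, hs₀.1], by linarith [hu.1, hs₀.2]⟩
        nlinarith
      · intro u hu
        rw [hμt1]
        have h := hClip (D 1) (u - s₀ + D 1)
        have habs : |D 1 - (u - s₀ + D 1)| ≤ B := by
          rw [show D 1 - (u - s₀ + D 1) = s₀ - u by ring]
          exact abs_le.mpr ⟨by linarith [hu.2, hs₀.1], by linarith [hu.1, hs₀.2]⟩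
        nlinarith
      · intro s; rw [hμ1, hμt1]
      · intro u q h0 h1
        rw [hμ1, hμt1]
        have h := hClip (q - s₀ + D 1) (u - s₀ + D 1)
        have habs : |q - s₀ + D 1 - (u - s₀ + D 1)| ≤ δ := by
          rw [show q - s₀ + D 1 - (u - s₀ + D 1) = -(u - q) by ring, abs_neg]
          exact abs_le.mpr ⟨by linarith, h1⟩
        push_cast
        nlinarith
    | succ τ hτ ih =>
      obtain ⟨⟨Lμ, hLμ⟩, ⟨Lt, hLt⟩, hle, hH⟩ := ih
      -- lower bound for μ (τ+1)
      have hLμ' : ∀ u ∈ Set.Icc (0 : ℝ) B, C (D (τ + 1)) - M * B + Lμ ≤ μ (τ + 1) u := by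
        intro s hs
        rw [hμrec τ hτ s]
        apply le_ciInf
        intro u
        have h := hClip (s - (u : ℝ) + D (τ + 1)) (D (τ + 1))
        -- wrong direction; need lower bound on C term
        have h2 : C (D (τ + 1)) - M * B ≤ C (s - (u : ℝ) + D (τ + 1)) := by
          have h3 := hClip (D (τ + 1)) (s - (u : ℝ) + D (τ + 1))
          have habs : |D (τ + 1) - (s - (u : ℝ) + D (τ + 1))| ≤ B := by
            rw [show D (τ+1) - (s - (u:ℝ) + D (τ+1)) = (u:ℝ) - s by ring]
            exact abs_le.mpr ⟨by linarith [hs.2, (u.2 : (u:ℝ) ∈ Set.Icc (0:ℝ) B).1],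
              by linarith [hs.1, (u.2 : (u:ℝ) ∈ Set.Icc (0:ℝ) B).2]⟩
          nlinarith
        exact add_le_add h2 (hLμ _ u.2)
      have hLt' : ∀ u ∈ Set.Icc (0 : ℝ) B, C (D (τ + 1)) - M * B + Lt ≤ μt (τ + 1) u := by
        intro s hs
        rw [hμtrec τ hτ s]
        apply le_ciInf
        intro u
        have hu : (u : ℝ) ∈ Set.Icc (0 : ℝ) B := hGsub u.2
        have h2 : C (D (τ + 1)) - M * B ≤ C (s - (u : ℝ) + D (τ + 1)) := by
          have h3 := hClip (D (τ + 1)) (s - (u : ℝ) + D (τ + 1))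
          have habs : |D (τ + 1) - (s - (u : ℝ) + D (τ + 1))| ≤ B := by
            rw [show D (τ+1) - (s - (u:ℝ) + D (τ+1)) = (u:ℝ) - s by ring]
            exact abs_le.mpr ⟨by linarith [hs.2, hu.1], by linarith [hs.1, hu.2]⟩
          nlinarith
        exact add_le_add h2 (hLt _ hu)
      refine ⟨⟨C (D (τ + 1)) - M * B + Lμ, hLμ'⟩, ⟨C (D (τ + 1)) - M * B + Lt, hLt'⟩, ?_, ?_⟩
      · -- μ (τ+1) ≤ μt (τ+1)
        intro s
        rw [hμrec τ hτ s, hμtrec τ hτ s]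
        apply le_ciInf
        intro q
        have hq : (q : ℝ) ∈ Set.Icc (0 : ℝ) B := hGsub q.2
        have h1 : (⨅ s' : Set.Icc (0 : ℝ) B, (C (s - (s' : ℝ) + D (τ + 1)) + μ τ (s' : ℝ)))
            ≤ C (s - (q : ℝ) + D (τ + 1)) + μ τ (q : ℝ) :=
          ciInf_le (hbdd (μ τ) Lμ hLμ _ subset_rfl s (D (τ + 1))) ⟨(q : ℝ), hq⟩
        exact h1.trans (add_le_add_right (hle (q : ℝ)) _)
      · -- the key one-sided estimate
        intro u q h0 h1
        rw [hμrec τ hτ u, hμtrec τ hτ q]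
        rw [← sub_le_iff_le_add]
        apply le_ciInf
        intro v
        obtain ⟨w, hwG, hw0, hwδ⟩ := hgrid (v : ℝ) v.2
        have h2 : (⨅ s' : G, (C (q - (s' : ℝ) + D (τ + 1)) + μt τ (s' : ℝ)))
            ≤ C (q - w + D (τ + 1)) + μt τ w :=
          ciInf_le (hbdd (μt τ) Lt hLt G hGsub q (D (τ + 1))) ⟨w, hwG⟩
        have h3 : C (q - w + D (τ + 1)) ≤ C (u - (v : ℝ) + D (τ + 1)) + M * δ := by
          have h4 := hClip (q - w + D (τ + 1)) (u - (v : ℝ) + D (τ + 1))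
          have habs : |q - w + D (τ + 1) - (u - (v : ℝ) + D (τ + 1))| ≤ δ := by
            rw [show q - w + D (τ+1) - (u - (v:ℝ) + D (τ+1)) = ((v:ℝ) - w) - (u - q) by ring]
            exact abs_le.mpr ⟨by linarith, by linarith⟩
          nlinarith
        have h5 : μt τ w ≤ μ τ (v : ℝ) + M * τ * δ := hH (v : ℝ) w hw0 hwδ
        have : (⨅ s' : G, (C (q - (s' : ℝ) + D (τ + 1)) + μt τ (s' : ℝ)))
            ≤ C (u - (v : ℝ) + D (τ + 1)) + μ τ (v : ℝ) + M * (τ + 1) * δ := by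
          calc (⨅ s' : G, (C (q - (s' : ℝ) + D (τ + 1)) + μt τ (s' : ℝ)))
              ≤ C (q - w + D (τ + 1)) + μt τ w := h2
            _ ≤ (C (u - (v : ℝ) + D (τ + 1)) + M * δ) + (μ τ (v : ℝ) + M * τ * δ) :=
                add_le_add h3 h5
            _ = C (u - (v : ℝ) + D (τ + 1)) + μ τ (v : ℝ) + M * (τ + 1) * δ := by ring
        push_cast
        linarith
  -- conclude
  intro τ hτ s hs
  obtain ⟨-, -, hle, hH⟩ := main τ hτ
  have h1 := hle s
  have h2 := hH s s (by simp) (by simp [hδ.le])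
  have hpos : 0 ≤ M * (τ : ℝ) * δ := by positivity
  rw [abs_sub_le_iff]
  constructor
  · linarith
  · linarith
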